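/- Fix an integer d ≥ 1 and real parameters α, β, k with k > 0, k < β + 1 and α + β − k > 0. With the matrices X_n, Y_n, R_n, S_n defined in the context, one has (X_n + Y_n)·e = e and (R_n + S_n)·e = e for all n ≥ 0, where e ∈ ℝ^d is the all-ones vector; in particular, since R_0 = 0, S_0·e = e. (That is, the upper factor P_U with diagonal blocks Y_n and superdiagonal blocks X_n, and the lower factor P_L with diagonal blocks S_n and subdiagonal blocks R_n, have all row sums equal to 1.) -/

import Mathlib

noncomputable def a1 (d : ℕ) (α β k : ℝ) (i n : ℕ) : ℝ :=
  (((n : ℝ) + k) * ((n : ℝ) + β + (d : ℝ))) /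
    ((2 * (n : ℝ) + α + β + (d : ℝ) + (i : ℝ)) *
      ((n : ℝ) + k + (d : ℝ) - (i : ℝ) - 1))

noncomputable def a2 (d : ℕ) (α β k : ℝ) (i n : ℕ) : ℝ :=
  (((d : ℝ) - (i : ℝ) - 1) * (β - k + (i : ℝ) + 1)) /
    (((n : ℝ) + α + β - k + 2 * (i : ℝ) + 1) *
      ((n : ℝ) + k + (d : ℝ) - (i : ℝ) - 1))

noncomputable def a3 (d : ℕ) (α β k : ℝ) (i n : ℕ) : ℝ :=
  (((n : ℝ) + α + (i : ℝ)) * ((n : ℝ) + α + β - k + (d : ℝ) + (i : ℝ))) /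
    ((2 * (n : ℝ) + α + β + (d : ℝ) + (i : ℝ)) *
      ((n : ℝ) + α + β - k + 2 * (i : ℝ) + 1))

noncomputable def b1 (d : ℕ) (α β k : ℝ) (i n : ℕ) : ℝ :=
  ((n : ℝ) * ((n : ℝ) + k + (d : ℝ) - 1)) /
    ((2 * (n : ℝ) + α + β + (d : ℝ) + (i : ℝ) - 1) *
      ((n : ℝ) + k + (d : ℝ) - (i : ℝ) - 1))

noncomputable def b2 (d : ℕ) (α β k : ℝ) (i n : ℕ) : ℝ :=
  ((i : ℝ) * (k + (d : ℝ) - (i : ℝ) - 1)) /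
    (((n : ℝ) + α + β - k + 2 * (i : ℝ)) *
      ((n : ℝ) + k + (d : ℝ) - (i : ℝ) - 1))

noncomputable def b3 (d : ℕ) (α β k : ℝ) (i n : ℕ) : ℝ :=
  (((n : ℝ) + α + β + (d : ℝ) + (i : ℝ) - 1) * ((n : ℝ) + α + β - k + (i : ℝ))) /
    ((2 * (n : ℝ) + α + β + (d : ℝ) + (i : ℝ) - 1) *
      ((n : ℝ) + α + β - k + 2 * (i : ℝ)))

/-- `X n = Σ_{i=0}^{d-1} a₁(i,n) E_{ii}`. -/
noncomputable def Xm (d : ℕ) (α β k : ℝ) (n : ℕ) : Matrix (Fin d) (Fin d) ℝ :=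
  Matrix.of fun i j : Fin d =>
    if (i : ℕ) = (j : ℕ) then a1 d α β k i n else 0

/-- `Y n = Σ_{i=0}^{d-1} a₃(i,n) E_{ii} + Σ_{i=0}^{d-2} a₂(i,n) E_{i,i+1}`. -/
noncomputable def Ym (d : ℕ) (α β k : ℝ) (n : ℕ) : Matrix (Fin d) (Fin d) ℝ :=
  Matrix.of fun i j : Fin d =>
    if (i : ℕ) = (j : ℕ) then a3 d α β k i n
    else if (j : ℕ) = (i : ℕ) + 1 then a2 d α β k i n else 0

/-- `R n = Σ_{i=0}^{d-1} b₁(i,n) E_{ii}`. -/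
noncomputable def Rm (d : ℕ) (α β k : ℝ) (n : ℕ) : Matrix (Fin d) (Fin d) ℝ :=
  Matrix.of fun i j : Fin d =>
    if (i : ℕ) = (j : ℕ) then b1 d α β k i n else 0

/-- `S n = Σ_{i=0}^{d-1} b₃(i,n) E_{ii} + Σ_{i=0}^{d-2} b₂(i+1,n) E_{i+1,i}`. -/
noncomputable def Sm (d : ℕ) (α β k : ℝ) (n : ℕ) : Matrix (Fin d) (Fin d) ℝ :=
  Matrix.of fun i j : Fin d =>
    if (i : ℕ) = (j : ℕ) then b3 d α β k i n
    else if (i : ℕ) = (j : ℕ) + 1 then b2 d α β k i n else 0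

/-- `A n = Σ_{i=0}^{d-1} a₁(i,n)b₃(i,n+1) E_{ii}
          + Σ_{i=0}^{d-2} a₁(i+1,n)b₂(i+1,n+1) E_{i+1,i}`. -/
noncomputable def Am (d : ℕ) (α β k : ℝ) (n : ℕ) : Matrix (Fin d) (Fin d) ℝ :=
  Matrix.of fun i j : Fin d =>
    if (i : ℕ) = (j : ℕ) then a1 d α β k i n * b3 d α β k i (n + 1)
    else if (i : ℕ) = (j : ℕ) + 1 then a1 d α β k i n * b2 d α β k i (n + 1)
    else 0

/-- `B n = Σ_{i=0}^{d-2} a₃(i+1,n)b₂(i+1,n) E_{i+1,i}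
          + Σ_{i=0}^{d-2} a₂(i,n)b₃(i+1,n) E_{i,i+1}
          + Σ_{i=0}^{d-1} [a₁(i,n)b₁(i,n+1) + a₂(i,n)b₂(i+1,n)
                            + a₃(i,n)b₃(i,n)] E_{ii}`
(here `a₂(d-1,n)b₂(d,n) = 0` automatically since `a₂(d-1,n) = 0`). -/
noncomputable def Bm (d : ℕ) (α β k : ℝ) (n : ℕ) : Matrix (Fin d) (Fin d) ℝ :=
  Matrix.of fun i j : Fin d =>
    if (i : ℕ) = (j : ℕ) then
      a1 d α β k i n * b1 d α β k i (n + 1) +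
        a2 d α β k i n * b2 d α β k ((i : ℕ) + 1) n +
        a3 d α β k i n * b3 d α β k i n
    else if (i : ℕ) = (j : ℕ) + 1 then a3 d α β k i n * b2 d α β k i n
    else if (j : ℕ) = (i : ℕ) + 1 then a2 d α β k i n * b3 d α β k ((i : ℕ) + 1) n
    else 0

/-- `C n = Σ_{i=0}^{d-1} a₃(i,n)b₁(i,n) E_{ii}
          + Σ_{i=0}^{d-2} a₂(i,n)b₁(i+1,n) E_{i,i+1}`. -/
noncomputable def Cm (d : ℕ) (α β k : ℝ) (n : ℕ) : Matrix (Fin d) (Fin d) ℝ :=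
  Matrix.of fun i j : Fin d =>
    if (i : ℕ) = (j : ℕ) then a3 d α β k i n * b1 d α β k i n
    else if (j : ℕ) = (i : ℕ) + 1 then a2 d α β k i n * b1 d α β k ((i : ℕ) + 1) n
    else 0

lemma sum_a_eq_one (d : ℕ) (hd : 1 ≤ d) (α β k : ℝ)
    (hk : 0 < k) (hαβk : 0 < α + β - k) (i n : ℕ) (hi : i < d) :
    a1 d α β k i n + a2 d α β k i n + a3 d α β k i n = 1 := by
  have hN : (0:ℝ) ≤ (n:ℝ) := Nat.cast_nonneg n
  have hI0 : (0:ℝ) ≤ (i:ℝ) := Nat.cast_nonneg i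
  have hI : (i:ℝ) + 1 ≤ (d:ℝ) := by exact_mod_cast Nat.succ_le_of_lt hi
  have hd1 : (1:ℝ) ≤ (d:ℝ) := by exact_mod_cast hd
  have h1 : 2 * (n:ℝ) + α + β + (d:ℝ) + (i:ℝ) ≠ 0 := ne_of_gt (by linarith)
  have h2 : (n:ℝ) + k + (d:ℝ) - (i:ℝ) - 1 ≠ 0 := ne_of_gt (by linarith)
  have h3 : (n:ℝ) + α + β - k + 2 * (i:ℝ) + 1 ≠ 0 := ne_of_gt (by linarith)
  unfold a1 a2 a3
  rw [div_add_div _ _ (mul_ne_zero h1 h2) (mul_ne_zero h3 h2), div_add_div _ _ (mul_ne_zero (mul_ne_zero h1 h2) (mul_ne_zero h3 h2)) (mul_ne_zero h1 h3), div_eq_one_iff_eq (mul_ne_zero (mul_ne_zero (mul_ne_zero h1 h2) (mul_ne_zero h3 h2)) (mul_ne_zero h1 h3))]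
  ring

lemma sum_b_eq_one (d : ℕ) (hd : 1 ≤ d) (α β k : ℝ)
    (hk : 0 < k) (hαβk : 0 < α + β - k) (i n : ℕ) (hi : i < d) :
    b1 d α β k i n + b2 d α β k i n + b3 d α β k i n = 1 := by
  have hN : (0:ℝ) ≤ (n:ℝ) := Nat.cast_nonneg n
  have hI0 : (0:ℝ) ≤ (i:ℝ) := Nat.cast_nonneg i
  have hI : (i:ℝ) + 1 ≤ (d:ℝ) := by exact_mod_cast Nat.succ_le_of_lt hi
  have hd1 : (1:ℝ) ≤ (d:ℝ) := by exact_mod_cast hd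
  have h1 : 2 * (n:ℝ) + α + β + (d:ℝ) + (i:ℝ) - 1 ≠ 0 := ne_of_gt (by linarith)
  have h2 : (n:ℝ) + k + (d:ℝ) - (i:ℝ) - 1 ≠ 0 := ne_of_gt (by linarith)
  have h3 : (n:ℝ) + α + β - k + 2 * (i:ℝ) ≠ 0 := ne_of_gt (by linarith)
  unfold b1 b2 b3
  rw [div_add_div _ _ (mul_ne_zero h1 h2) (mul_ne_zero h3 h2), div_add_div _ _ (mul_ne_zero (mul_ne_zero h1 h2) (mul_ne_zero h3 h2)) (mul_ne_zero h1 h3), div_eq_one_iff_eq (mul_ne_zero (mul_ne_zero (mul_ne_zero h1 h2) (mul_ne_zero h3 h2)) (mul_ne_zero h1 h3))]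
  ring

lemma sum_diag (d : ℕ) (i : Fin d) (c : ℝ) :
    (∑ j : Fin d, if (i : ℕ) = (j : ℕ) then c else 0) = c := by
  have h : ∀ j : Fin d, (if (i : ℕ) = (j : ℕ) then c else 0)
      = (if j = i then c else 0) := by
    intro j
    congr 1
    simp [Fin.ext_iff, eq_comm]
  simp only [h, Finset.sum_ite_eq', Finset.mem_univ, if_true]

lemma sum_super (d : ℕ) (i : Fin d) (c : ℝ) :
    (∑ j : Fin d, if (j : ℕ) = (i : ℕ) + 1 then c else 0)
      = if (i : ℕ) + 1 < d then c else 0 := by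
  split_ifs with h
  · have heq : ∀ j : Fin d, ((j : ℕ) = (i : ℕ) + 1) = (j = ⟨(i:ℕ)+1, h⟩) := by
      intro j; simp [Fin.ext_iff]
    simp only [heq, Finset.sum_ite_eq', Finset.mem_univ, if_true]
  · have hne : ∀ j : Fin d, ¬((j : ℕ) = (i : ℕ) + 1) := by
      intro j hj; exact h (hj ▸ j.isLt)
    simp [hne]

lemma sum_sub (d : ℕ) (i : Fin d) (c : ℝ) :
    (∑ j : Fin d, if (i : ℕ) = (j : ℕ) + 1 then c else 0)
      = if 0 < (i : ℕ) then c else 0 := by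
  split_ifs with h
  · have hlt : (i : ℕ) - 1 < d := lt_of_le_of_lt (Nat.pred_le _) i.isLt
    have heq : ∀ j : Fin d, ((i : ℕ) = (j : ℕ) + 1) = (j = ⟨(i:ℕ)-1, hlt⟩) := by
      intro j
      rw [eq_iff_iff]
      simp only [Fin.ext_iff, Fin.val_mk]
      constructor <;> intro hj <;> omega
    simp only [heq, Finset.sum_ite_eq', Finset.mem_univ, if_true]
  · have hne : ∀ j : Fin d, ¬((i : ℕ) = (j : ℕ) + 1) := by
      intro j hj; omega
    simp [hne]

/-- The factors `P_U` and `P_L` of the Jacobi-type example have all row sums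
equal to one. -/
theorem stmt_8 (d : ℕ) (hd : 1 ≤ d) (α β k : ℝ)
    (hk : 0 < k) (hkβ : k < β + 1) (hαβk : 0 < α + β - k) :
    (∀ n : ℕ,
      (Xm d α β k n + Ym d α β k n).mulVec (fun _ => (1 : ℝ)) = fun _ => 1) ∧
    (∀ n : ℕ,
      (Rm d α β k n + Sm d α β k n).mulVec (fun _ => (1 : ℝ)) = fun _ => 1) ∧
    Rm d α β k 0 = 0 ∧
    (Sm d α β k 0).mulVec (fun _ => (1 : ℝ)) = fun _ => 1 := by
  have hR0 : Rm d α β k 0 = 0 := by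
    ext i j
    simp [Rm, b1]
  have hXY : ∀ n : ℕ,
      (Xm d α β k n + Ym d α β k n).mulVec (fun _ => (1 : ℝ)) = fun _ => 1 := by
    intro n
    funext i
    have entry : ∀ j : Fin d, (Xm d α β k n + Ym d α β k n) i j
        = (if (i:ℕ) = (j:ℕ) then a1 d α β k i n + a3 d α β k i n else 0)
          + (if (j:ℕ) = (i:ℕ) + 1 then a2 d α β k i n else 0) := by
      intro j
      simp only [Matrix.add_apply, Xm, Ym, Matrix.of_apply]
      split_ifs with h1 h2 <;> first | omega | ring
    have hsum := sum_a_eq_one d hd α β k hk hαβk i n i.isLt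
    simp only [Matrix.mulVec, dotProduct, mul_one]
    rw [Finset.sum_congr rfl (fun j _ => entry j), Finset.sum_add_distrib,
      sum_diag, sum_super]
    split_ifs with h
    · linarith
    · have hi1 : (i:ℕ) + 1 = d := by have := i.isLt; omega
      have hcast : ((d:ℝ) - (i:ℝ) - 1) = 0 := by
        have := congrArg (Nat.cast : ℕ → ℝ) hi1
        push_cast at this
        linarith
      have h2z : a2 d α β k i n = 0 := by simp [a2, hcast]
      rw [h2z] at hsum
      linarith
  have hRS : ∀ n : ℕ,
      (Rm d α β k n + Sm d α β k n).mulVec (fun _ => (1 : ℝ)) = fun _ => 1 := by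
    intro n
    funext i
    have entry : ∀ j : Fin d, (Rm d α β k n + Sm d α β k n) i j
        = (if (i:ℕ) = (j:ℕ) then b1 d α β k i n + b3 d α β k i n else 0)
          + (if (i:ℕ) = (j:ℕ) + 1 then b2 d α β k i n else 0) := by
      intro j
      simp only [Matrix.add_apply, Rm, Sm, Matrix.of_apply]
      split_ifs with h1 h2 <;> first | omega | ring
    have hsum := sum_b_eq_one d hd α β k hk hαβk i n i.isLt
    simp only [Matrix.mulVec, dotProduct, mul_one]
    rw [Finset.sum_congr rfl (fun j _ => entry j), Finset.sum_add_distrib,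
      sum_diag, sum_sub]
    split_ifs with h
    · linarith
    · have hi0 : ((i:ℕ) : ℝ) = 0 := by
        have : (i:ℕ) = 0 := by omega
        simp [this]
      have h2z : b2 d α β k i n = 0 := by simp [b2, hi0]
      rw [h2z] at hsum
      linarith
  refine ⟨hXY, hRS, hR0, ?_⟩
  have := hRS 0
  rwa [hR0, zero_add] at this
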